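/- The empty space is the only finitely generated object of the category Top₀ of T₀-spaces: every T₀-space X that is finitely generated in Top₀ is empty. -/

import Mathlib

open CategoryTheory CategoryTheory.Limits

universe u

namespace T0FG

inductive Pt : Type u
  | core : Bool → Pt
  | seq : Bool → ℕ → Pt

open Pt

/-- The stage-`n` open sets. -/
def opn (n : ℕ) (U : Set Pt.{u}) : Prop :=
  (∀ c : Bool, core c ∈ U → ∃ k, n ≤ k ∧ ∀ j, k ≤ j → seq c j ∈ U) ∧
  (∀ c : Bool, ∀ j, j < n → seq c j ∈ U → core (!c) ∈ U)

def tau (n : ℕ) : TopologicalSpace Pt.{u} where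
  IsOpen := opn n
  isOpen_univ := ⟨fun c _ => ⟨n, le_rfl, fun _ _ => trivial⟩, fun _ _ _ _ => trivial⟩
  isOpen_inter := by
    rintro U V ⟨hU1, hU2⟩ ⟨hV1, hV2⟩
    refine ⟨fun c hc => ?_, fun c j hj hcj => ⟨hU2 c j hj hcj.1, hV2 c j hj hcj.2⟩⟩
    obtain ⟨k1, hk1, h1⟩ := hU1 c hc.1
    obtain ⟨k2, hk2, h2⟩ := hV1 c hc.2
    exact ⟨max k1 k2, le_trans hk1 (le_max_left _ _),
      fun j hj => ⟨h1 j (le_trans (le_max_left _ _) hj), h2 j (le_trans (le_max_right _ _) hj)⟩⟩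
  isOpen_sUnion := by
    intro S hS
    constructor
    · rintro c ⟨t, ht, hct⟩
      obtain ⟨k, hk, h⟩ := (hS t ht).1 c hct
      exact ⟨k, hk, fun j hj => ⟨t, ht, h j hj⟩⟩
    · rintro c j hj ⟨t, ht, hct⟩
      exact ⟨t, ht, (hS t ht).2 c j hj hct⟩

lemma opn_antitone {m n : ℕ} (h : m ≤ n) {U : Set Pt.{u}} (hU : opn n U) : opn m U := by
  refine ⟨fun c hc => ?_, fun c j hj => hU.2 c j (lt_of_lt_of_le hj h)⟩
  obtain ⟨k, hk, hkt⟩ := hU.1 c hc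
  exact ⟨k, le_trans h hk, hkt⟩

/-- basic open around `core c`. -/
def Aset (c : Bool) (K : ℕ) : Set Pt.{u} := fun p =>
  match p with
  | core c' => c' = c
  | seq c' j => c' = c ∧ K ≤ j

lemma Aset_opn {n : ℕ} (c : Bool) {K : ℕ} (hK : n ≤ K) : opn n (Aset.{u} c K) := by
  constructor
  · intro c' hc'
    exact ⟨K, hK, fun j hj => ⟨(show c' = c from hc'), hj⟩⟩
  · intro c' j hj hmem
    exact absurd (le_trans hK hmem.2) (not_le.mpr hj)

/-- basic open around `seq c j0`, needed when `j0 < n`. -/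
def Bset (c : Bool) (j0 n : ℕ) : Set Pt.{u} := fun p =>
  match p with
  | core c' => c' = !c
  | seq c' j => (c' = c ∧ j = j0) ∨ (c' = !c ∧ n ≤ j)

lemma Bset_opn {n : ℕ} (c : Bool) (j0 : ℕ) : opn n (Bset.{u} c j0 n) := by
  constructor
  · intro c' hc'
    refine ⟨n, le_rfl, fun j hj => Or.inr ⟨(show c' = !c from hc'), hj⟩⟩
  · intro c' j hj hmem
    rcases hmem with ⟨hc', _⟩ | ⟨_, hn⟩
    · show (!c') = !c
      rw [hc']
    · exact absurd hn (not_le.mpr hj)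

/-- singleton `{seq c j0}`, open when `n ≤ j0`. -/
def Sset (c : Bool) (j0 : ℕ) : Set Pt.{u} := fun p =>
  match p with
  | core _ => False
  | seq c' j => c' = c ∧ j = j0

lemma Sset_opn {n : ℕ} (c : Bool) {j0 : ℕ} (h : n ≤ j0) : opn n (Sset.{u} c j0) := by
  constructor
  · intro c' hc'
    exact hc'.elim
  · intro c' j hj hmem
    exact absurd (hmem.2 ▸ hj) (not_lt.mpr h)

lemma t0 (n : ℕ) : @T0Space Pt.{u} (tau n) := by
  letI := tau.{u} n
  refine ⟨fun x y h => ?_⟩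
  rw [inseparable_iff_forall_isOpen] at h
  by_contra hxy
  cases x with
  | core c =>
    cases y with
    | core c' =>
      have := h (Aset c n) (Aset_opn c le_rfl)
      have hc : (c' : Bool) = c := this.mp rfl
      exact hxy (by rw [hc])
    | seq c' j =>
      have := h (Aset c (max n (j+1))) (Aset_opn c (le_max_left _ _))
      have h2 : c' = c ∧ max n (j+1) ≤ j := this.mp rfl
      exact absurd (le_trans (le_max_right n (j+1)) h2.2) (by omega)
  | seq c j =>
    cases y with
    | core c' =>
      have := h (Aset c' (max n (j+1))) (Aset_opn c' (le_max_left _ _))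
      have h2 : c = c' ∧ max n (j+1) ≤ j := this.mpr rfl
      exact absurd (le_trans (le_max_right n (j+1)) h2.2) (by omega)
    | seq c' j' =>
      by_cases hn : n ≤ j
      · have := h (Sset c j) (Sset_opn c hn)
        have h2 : c' = c ∧ j' = j := this.mp ⟨rfl, rfl⟩
        exact hxy (by rw [h2.1, h2.2])
      · by_cases hn' : n ≤ j'
        · have := h (Sset c' j') (Sset_opn c' hn')
          have h2 : c = c' ∧ j = j' := this.mpr ⟨rfl, rfl⟩
          exact hxy (by rw [h2.1, h2.2])
        · have := h (Bset c j n) (Bset_opn c j)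
          have h2 := this.mp (Or.inl ⟨rfl, rfl⟩)
          rcases h2 with ⟨hc', hj'⟩ | ⟨_, hge⟩
          · exact hxy (by rw [hc', hj'])
          · exact hn' hge

end T0FG
namespace T0FG
open Pt

inductive Wt : Type u
  | base : Wt
  | pt : Bool → ℕ → Wt

def wopn (V : Set Wt.{u}) : Prop :=
  (∀ c j, Wt.pt c j ∈ V → Wt.base ∈ V) ∧
  (Wt.base ∈ V → ∀ c : Bool, ∃ k, ∀ j, k ≤ j → Wt.pt c j ∈ V)

instance wtop : TopologicalSpace Wt.{u} where
  IsOpen := wopn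
  isOpen_univ := ⟨fun _ _ _ => trivial, fun _ c => ⟨0, fun _ _ => trivial⟩⟩
  isOpen_inter := by
    rintro U V ⟨hU1, hU2⟩ ⟨hV1, hV2⟩
    refine ⟨fun c j h => ⟨hU1 c j h.1, hV1 c j h.2⟩, fun h c => ?_⟩
    obtain ⟨k1, h1⟩ := hU2 h.1 c
    obtain ⟨k2, h2⟩ := hV2 h.2 c
    exact ⟨max k1 k2, fun j hj => ⟨h1 j (le_trans (le_max_left _ _) hj),
      h2 j (le_trans (le_max_right _ _) hj)⟩⟩
  isOpen_sUnion := by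
    intro S hS
    constructor
    · rintro c j ⟨t, ht, hm⟩
      exact ⟨t, ht, (hS t ht).1 c j hm⟩
    · rintro ⟨t, ht, hm⟩ c
      obtain ⟨k, hk⟩ := (hS t ht).2 hm c
      exact ⟨k, fun j hj => ⟨t, ht, hk j hj⟩⟩

lemma wopn_compl_pt (c : Bool) (j0 : ℕ) : wopn.{u} {Wt.pt c j0}ᶜ := by
  constructor
  · intro c' j' _
    simp only [Set.mem_compl_iff, Set.mem_singleton_iff]
    intro h; cases h
  · intro _ c'
    refine ⟨j0 + 1, fun j hj => ?_⟩
    simp only [Set.mem_compl_iff, Set.mem_singleton_iff]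
    intro h
    injection h with h1 h2
    omega

instance wt0 : T0Space Wt.{u} := by
  refine ⟨fun x y h => ?_⟩
  rw [inseparable_iff_forall_isOpen] at h
  by_contra hxy
  cases x with
  | base =>
    cases y with
    | base => exact hxy rfl
    | pt c j =>
      have := (h {Wt.pt c j}ᶜ (wopn_compl_pt c j)).mp (by simp)
      simp at this
  | pt c j =>
    have := (h {Wt.pt c j}ᶜ (wopn_compl_pt c j)).mpr
    cases y with
    | base => simpa using this (by simp)
    | pt c' j' =>
      have := this (by simp only [Set.mem_compl_iff, Set.mem_singleton_iff]; intro hh; exact hxy hh.symm)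
      simp at this

/-- the quotient-like map -/
def q : Pt.{u} → Wt.{u}
  | core _ => Wt.base
  | seq c j => Wt.pt c j

lemma q_cont (n : ℕ) {V : Set Wt.{u}} (hV : wopn V) : opn n (q ⁻¹' V) := by
  constructor
  · intro c hc
    obtain ⟨k, hk⟩ := hV.2 hc c
    exact ⟨max n k, le_max_left _ _, fun j hj => hk j (le_trans (le_max_right _ _) hj)⟩
  · intro c j _ hm
    exact hV.1 c j hm

/-- the key property of sets open at every stage -/
lemma core_mem_of_core_mem {U : Set Pt.{u}} (hU : ∀ n, opn n U) (c c' : Bool)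
    (hc : core c ∈ U) : core c' ∈ U := by
  by_cases hcc : c' = c
  · exact hcc ▸ hc
  · obtain ⟨k, -, hk⟩ := (hU 0).1 c hc
    have hs : seq c k ∈ U := hk k le_rfl
    have := (hU (k+1)).2 c k (Nat.lt_succ_self k) hs
    have hbc : (!c) = c' := by
      cases c <;> cases c' <;> simp_all
    exact hbc ▸ this

end T0FG
namespace T0FG
open Pt

lemma topHomExt {A B : TopCat.{u}} {f g : A ⟶ B} (h : ∀ a : A, f a = g a) : f = g :=
  TopCat.hom_ext (ContinuousMap.ext h)

lemma topHomCongr {A B : TopCat.{u}} {f g : A ⟶ B} (h : f = g) (a : A) : f a = g a :=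
  by rw [h]

abbrev P0 : TopCat.{u} → Prop := fun Y => T0Space Y

def Zobj (n : ℕ) : TopCat.{u} := @TopCat.of Pt.{u} (tau n)

def Fobj (n : ℕ) : ObjectProperty.FullSubcategory P0.{u} := ⟨Zobj n, t0 n⟩

def conn {m n : ℕ} (h : m ≤ n) : Zobj.{u} m ⟶ Zobj n :=
  @TopCat.ofHom _ _ (tau m) (tau n) (@ContinuousMap.mk Pt.{u} Pt.{u} (tau m) (tau n) id (by
    rw [@continuous_def _ _ (tau m) (tau n)]
    intro U hU
    exact opn_antitone h hU))

def Fdiag : ULift.{u} ℕ ⥤ ObjectProperty.FullSubcategory P0.{u} where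
  obj n := Fobj n.down
  map {i j} f := ObjectProperty.homMk (conn (ULift.down_le.mpr (leOfHom f)))
  map_id := fun _ => rfl
  map_comp := fun _ _ => rfl

def Wcat : TopCat.{u} := TopCat.of Wt.{u}

def Wobj : ObjectProperty.FullSubcategory P0.{u} := ⟨Wcat, wt0⟩

def qm (n : ℕ) : Zobj.{u} n ⟶ Wcat.{u} :=
  @TopCat.ofHom _ _ (tau n) wtop (@ContinuousMap.mk Pt.{u} Wt.{u} (tau n) wtop q (by
    rw [@continuous_def _ _ (tau n) wtop]
    intro V hV
    exact q_cont n hV))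

def coc : Cocone Fdiag.{u} where
  pt := Wobj
  ι := { app := fun n => (ObjectProperty.homMk (qm n.down) : Fobj.{u} n.down ⟶ Wobj)
         naturality := fun i j f => rfl }

/-- the cocone leg of an arbitrary cocone, as a `TopCat` hom -/
def appF (s : Cocone Fdiag.{u}) (n : ℕ) : Zobj.{u} n ⟶ s.pt.obj := (s.ι.app ⟨n⟩).hom

lemma appF_eq (s : Cocone Fdiag.{u}) (n : ℕ) (p : Pt.{u}) :
    appF s n p = appF s 0 p := by
  have h0 : Fdiag.{u}.map (homOfLE (show (⟨0⟩ : ULift.{u} ℕ) ≤ ⟨n⟩ from Nat.zero_le n)) ≫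
      s.ι.app ⟨n⟩ = s.ι.app ⟨0⟩ := by
    rw [s.ι.naturality]; simp
  have h1 : conn (Nat.zero_le n) ≫ appF s n = appF s 0 := congrArg (fun k => k.hom) h0
  have h2 : appF s n ((conn (Nat.zero_le n)) p) = appF s 0 p := topHomCongr h1 p
  have h3 : appF s n p = appF s n ((conn (Nat.zero_le n)) p) := rfl
  exact h3.trans h2

/-- the preimage of an open set under any leg, open in every stage -/
lemma appF_preopen (s : Cocone Fdiag.{u}) {V : Set (s.pt.obj : Type u)} (hV : IsOpen V)
    (n : ℕ) : opn n (appF s 0 ⁻¹' V) := by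
  have : appF s 0 ⁻¹' V = appF s n ⁻¹' V := by
    ext p; show appF s 0 p ∈ V ↔ appF s n p ∈ V; rw [appF_eq s n p]
  refine Eq.mpr (congrArg (opn n) this) ?_
  exact (appF s n).hom.continuous.isOpen_preimage V hV

lemma merge (s : Cocone Fdiag.{u}) :
    appF s 0 (core true) = appF s 0 (core false) := by
  haveI : T0Space (s.pt.obj : Type u) := s.pt.property
  apply Inseparable.eq
  rw [inseparable_iff_forall_isOpen]
  intro V hV
  have hU : ∀ n, opn n (appF s 0 ⁻¹' V) := appF_preopen s hV
  constructor
  · intro h; exact core_mem_of_core_mem hU true false h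
  · intro h; exact core_mem_of_core_mem hU false true h

def dfun (s : Cocone Fdiag.{u}) : Wt.{u} → (s.pt.obj : Type u)
  | Wt.base => appF s 0 (core true)
  | Wt.pt c j => appF s 0 (seq c j)

lemma dfun_preopen (s : Cocone Fdiag.{u}) {V : Set (s.pt.obj : Type u)} (hV : IsOpen V) :
    wopn (dfun s ⁻¹' V) := by
  have hU : ∀ n, opn n (appF s 0 ⁻¹' V) := appF_preopen s hV
  constructor
  · intro c j h
    have h1 : seq c j ∈ appF s 0 ⁻¹' V := h
    have h2 : core (!c) ∈ appF s 0 ⁻¹' V := (hU (j+1)).2 c j (Nat.lt_succ_self j) h1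
    exact core_mem_of_core_mem hU (!c) true h2
  · intro h c
    have h1 : core c ∈ appF s 0 ⁻¹' V := core_mem_of_core_mem hU true c h
    obtain ⟨k, -, hk⟩ := (hU 0).1 c h1
    exact ⟨k, fun j hj => hk j hj⟩

def descMap (s : Cocone Fdiag.{u}) : Wcat.{u} ⟶ s.pt.obj :=
  TopCat.ofHom (@ContinuousMap.mk Wt.{u} _ wtop _ (dfun s) (by
    rw [continuous_def]
    intro V hV
    exact dfun_preopen s hV))

def iscolim : IsColimit coc.{u} where
  desc s := (ObjectProperty.homMk (descMap s) : Wobj.{u} ⟶ s.pt)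
  fac s n := by
    have key : ∀ p : Pt.{u}, dfun s (q p) = appF s n.down p := by
      intro p
      cases p with
      | core c =>
        show appF s 0 (core true) = appF s n.down (core c)
        rw [appF_eq s n.down]
        cases c
        · exact merge s
        · rfl
      | seq c j => exact (appF_eq s n.down (seq c j)).symm
    exact InducedCategory.hom_ext (topHomExt (A := Zobj n.down) (B := s.pt.obj) (f := qm n.down ≫ descMap s) (g := appF s n.down) key)
  uniq s m hm := by
    let m' : Wcat.{u} ⟶ s.pt.obj := m.hom
    have h1 : qm 0 ≫ m' = appF s 0 := congrArg (fun k => k.hom) (hm ⟨0⟩)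
    have h0' : ∀ p : Pt.{u}, m' (q p) = appF s 0 p := by
      intro p
      have h2 : m' ((qm 0) p) = appF s 0 p := topHomCongr h1 p
      exact h2
    have key : ∀ w : Wt.{u}, m' w = descMap s w := by
      intro w
      cases w with
      | base => exact h0' (core true)
      | pt c j => exact h0' (seq c j)
    exact InducedCategory.hom_ext (topHomExt (A := Wcat) (B := s.pt.obj) (f := m') key)

end T0FG
/-- An object `X` of the full subcategory of `Top` given by a property `P` is finitely
generated there if for every diagram in the subcategory indexed by a directed poset
(every finite subset has an upper bound) whose connecting maps are monomorphisms
(injective continuous maps), with colimit cocone `c` in the subcategory, every morphism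
`f : X ⟶ c.pt` factors through some colimit injection, essentially uniquely (any two
factorizations through the same stage are merged by a connecting map). -/
def TopCat.FinGenIn (P : TopCat.{u} → Prop) (X : ObjectProperty.FullSubcategory P) : Prop :=
  ∀ (I : Type u) [PartialOrder I] [Nonempty I] [IsDirected I (· ≤ ·)]
    (F : I ⥤ ObjectProperty.FullSubcategory P),
    (∀ {i j : I} (f : i ⟶ j),
      Function.Injective ((ObjectProperty.ι P).map (F.map f))) →
    ∀ (c : Cocone F), IsColimit c →
      ∀ f : X ⟶ c.pt,
        (∃ (i : I) (g : X ⟶ F.obj i), g ≫ c.ι.app i = f) ∧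
        (∀ (i : I) (g g' : X ⟶ F.obj i), g ≫ c.ι.app i = f → g' ≫ c.ι.app i = f →
          ∃ (j : I) (h : i ≤ j), g ≫ F.map (homOfLE h) = g' ≫ F.map (homOfLE h))

/-- The empty space is the only finitely generated object of the
category `Top₀` of T₀-spaces. -/
theorem T0_finGen_empty (X : ObjectProperty.FullSubcategory (fun Y : TopCat.{u} => T0Space Y))
    (hX : TopCat.FinGenIn _ X) : IsEmpty X.obj := by
  refine ⟨fun x0 => ?_⟩
  haveI : IsDirected (ULift.{u} ℕ) (· ≤ ·) :=
    ⟨fun a b => ⟨⟨max a.down b.down⟩, le_max_left a.down b.down, le_max_right a.down b.down⟩⟩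
  have hinj : ∀ {i j : ULift.{u} ℕ} (f : i ⟶ j),
      Function.Injective ((ObjectProperty.ι T0FG.P0).map (T0FG.Fdiag.map f)) :=
    fun _ a b h => h
  let fconst : X ⟶ T0FG.coc.{u}.pt :=
    ObjectProperty.homMk (TopCat.ofHom (ContinuousMap.const (X.obj : Type u) T0FG.Wt.base) : X.obj ⟶ T0FG.Wcat.{u})
  have hX' : TopCat.FinGenIn T0FG.P0.{u} X := hX
  obtain ⟨-, huniq⟩ := hX' (ULift.{u} ℕ) T0FG.Fdiag.{u} hinj T0FG.coc T0FG.iscolim fconst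
  let g : X ⟶ T0FG.Fdiag.{u}.obj ⟨0⟩ :=
    ObjectProperty.homMk (@TopCat.ofHom _ _ _ (T0FG.tau 0) (@ContinuousMap.mk _ _ _ (T0FG.tau 0) (fun _ => T0FG.Pt.core true) (@continuous_const _ _ _ (T0FG.tau 0) _)) : X.obj ⟶ T0FG.Zobj.{u} 0)
  let g' : X ⟶ T0FG.Fdiag.{u}.obj ⟨0⟩ :=
    ObjectProperty.homMk (@TopCat.ofHom _ _ _ (T0FG.tau 0) (@ContinuousMap.mk _ _ _ (T0FG.tau 0) (fun _ => T0FG.Pt.core false) (@continuous_const _ _ _ (T0FG.tau 0) _)) : X.obj ⟶ T0FG.Zobj.{u} 0)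
  have hg : g ≫ T0FG.coc.{u}.ι.app ⟨0⟩ = fconst :=
    InducedCategory.hom_ext (T0FG.topHomExt (A := X.obj) (B := T0FG.Wcat.{u}) (fun _ => rfl))
  have hg' : g' ≫ T0FG.coc.{u}.ι.app ⟨0⟩ = fconst :=
    InducedCategory.hom_ext (T0FG.topHomExt (A := X.obj) (B := T0FG.Wcat.{u}) (fun _ => rfl))
  obtain ⟨j, hj, heq⟩ := huniq ⟨0⟩ g g' hg hg'
  have heq2 : ((g ≫ T0FG.Fdiag.{u}.map (homOfLE hj)).hom : X.obj ⟶ T0FG.Zobj.{u} j.down)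
      = ((g' ≫ T0FG.Fdiag.{u}.map (homOfLE hj)).hom : X.obj ⟶ T0FG.Zobj.{u} j.down) := congrArg (fun k => k.hom) heq
  have h3 : T0FG.Pt.core.{u} true = T0FG.Pt.core.{u} false := T0FG.topHomCongr heq2 x0
  injection h3 with h4
  exact Bool.noConfusion h4
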